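/- Let G be an MPDAG in which the total effect of A on Y is not identified, and let p = <A1, V1, ..., Y1> be a shortest proper possibly causal path from A to Y starting with the undirected edge A1 - V1. Then in any MPDAG G* represented by G that still contains the undirected edge A1 - V1, the path corresponding to p remains a proper possibly causal path from A to Y starting with an undirected edge; hence the total effect of A on Y is not identified in G*. -/

import Mathlib

/-- A partially directed graph: directed edges `dir` and undirected edges `undir`. -/
structure PDAG (V : Type) where
  dir : V → V → Prop
  undir : V → V → Prop
  undir_symm : ∀ a b, undir a b → undir b a

namespace PDAG

variable {V : Type}

/-- Two nodes are adjacent if joined by a directed or undirected edge. -/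
def adj (G : PDAG V) (a b : V) : Prop := G.dir a b ∨ G.dir b a ∨ G.undir a b

/-- Each pair of nodes is joined by at most one edge, and no self loops. -/
def Wellformed (G : PDAG V) : Prop :=
  (∀ a b, ¬ (G.dir a b ∧ G.dir b a)) ∧ (∀ a b, ¬ (G.dir a b ∧ G.undir a b)) ∧
  (∀ a, ¬ G.undir a a)

/-- No directed cycles. -/
def Acyclic (G : PDAG V) : Prop := ∀ a, ¬ Relation.TransGen G.dir a a

/-- Closure under Meek's orientation rules R1–R4. -/
def MeekClosed (G : PDAG V) : Prop :=
  (∀ a b c, G.dir a b → G.undir b c → ¬ G.adj a c → G.dir b c) ∧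
  (∀ a b c, G.dir a c → G.dir c b → G.undir a b → G.dir a b) ∧
  (∀ a b c d, G.undir a b → G.undir a c → G.undir a d → G.dir c b → G.dir d b →
    ¬ G.adj c d → G.dir a b) ∧
  (∀ a b c d, G.undir d a → G.undir d b → G.undir d c → G.dir a b → G.dir b c →
    ¬ G.adj a c → G.dir d c)

/-- A maximally oriented PDAG. -/
def IsMPDAG (G : PDAG V) : Prop := G.Wellformed ∧ G.Acyclic ∧ G.MeekClosed

/-- A DAG: acyclic, no undirected edges. -/
def IsDAG (G : PDAG V) : Prop := G.Wellformed ∧ G.Acyclic ∧ ∀ a b, ¬ G.undir a b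

/-- A path: at least two distinct nodes, consecutive ones adjacent. -/
def IsPath (G : PDAG V) (p : List V) : Prop :=
  2 ≤ p.length ∧ p.Nodup ∧ List.Chain' G.adj p

/-- Possibly causal path: no edge `Vi ← Vj` in `G` for `i < j` among the path's nodes. -/
def PossiblyCausal (G : PDAG V) (p : List V) : Prop :=
  p.Pairwise (fun a b => ¬ G.dir b a)

/-- Causal path: every consecutive edge directed forwards. -/
def Causal (G : PDAG V) (p : List V) : Prop := List.Chain' G.dir p

/-- Unshielded path: endpoints of every consecutive triple are nonadjacent. -/
def Unshielded (G : PDAG V) (p : List V) : Prop :=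
  ∀ a b c, [a, b, c] <:+: p → ¬ G.adj a c

/-- Proper path w.r.t. `A`: only the first node is in `A`. -/
def ProperFrom (A : Set V) (p : List V) : Prop :=
  ∃ a t, p = a :: t ∧ a ∈ A ∧ ∀ x ∈ t, x ∉ A

/-- The path ends in the set `Y`. -/
def EndsIn (p : List V) (Y : Set V) : Prop := ∃ y, p.getLast? = some y ∧ y ∈ Y

/-- The path starts with an undirected edge. -/
def StartsUndir (G : PDAG V) (p : List V) : Prop :=
  ∃ a b t, p = a :: b :: t ∧ G.undir a b

/-- The path starts with a directed edge. -/
def StartsDir (G : PDAG V) (p : List V) : Prop :=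
  ∃ a b t, p = a :: b :: t ∧ G.dir a b

/-- A proper possibly causal path from `A` to `Y`. -/
def PPCPath (G : PDAG V) (A Y : Set V) (p : List V) : Prop :=
  G.IsPath p ∧ G.PossiblyCausal p ∧ ProperFrom A p ∧ EndsIn p Y

/-- Perković's identifiability condition: every proper possibly causal path from `A`
to `Y` starts with a directed edge. -/
def IdCond (G : PDAG V) (A Y : Set V) : Prop :=
  ∀ p, G.PPCPath A Y p → G.StartsDir p

/-- A violating path: proper possibly causal from `A` to `Y` starting with an
undirected edge. -/
def ViolPath (G : PDAG V) (A Y : Set V) (p : List V) : Prop :=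
  G.PPCPath A Y p ∧ G.StartsUndir p

/-- A shortest violating path. -/
def ShortestViol (G : PDAG V) (A Y : Set V) (p : List V) : Prop :=
  G.ViolPath A Y p ∧ ∀ q, G.ViolPath A Y q → p.length ≤ q.length

/-- Same adjacencies. -/
def SameAdj (G' G : PDAG V) : Prop := ∀ a b, G'.adj a b ↔ G.adj a b

/-- Same unshielded colliders. -/
def SameUC (G' G : PDAG V) : Prop :=
  ∀ a b c, (G'.dir a b ∧ G'.dir c b ∧ ¬ G'.adj a c) ↔
    (G.dir a b ∧ G.dir c b ∧ ¬ G.adj a c)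

/-- `G'` is represented by `G`: same adjacencies, same unshielded colliders, and
every directed edge of `G` appears in `G'`. -/
def RepresentedBy (G' G : PDAG V) : Prop :=
  SameAdj G' G ∧ SameUC G' G ∧ ∀ a b, G.dir a b → G'.dir a b

/-- `G1 = MPDAG(G, {A1 → V1})`: the least maximally oriented graph represented by `G`
containing the orientation `A1 → V1`. -/
def IsOrientClosure (G : PDAG V) (A1 V1 : V) (G1 : PDAG V) : Prop :=
  G1.IsMPDAG ∧ RepresentedBy G1 G ∧ G1.dir A1 V1 ∧
  (∀ a b, G1.undir a b ↔ (G.adj a b ∧ ¬ G1.dir a b ∧ ¬ G1.dir b a)) ∧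
  (∀ H : PDAG V, H.IsMPDAG → RepresentedBy H G → H.dir A1 V1 →
    ∀ a b, G1.dir a b → H.dir a b)

end PDAG

/-- If the total effect of `A` on `Y` is not identified in MPDAG `G` and
`p = ⟨A1, V1, …, Y1⟩` is a shortest proper possibly causal path from `A` to `Y`
starting with the undirected edge `A1 - V1`, then in any MPDAG `G*` represented
by `G` that still contains the undirected edge `A1 - V1`, the path `p` is still a
proper possibly causal path from `A` to `Y` starting with an undirected edge;
hence the effect is not identified in `G*` either. -/
theorem stmt6 {V : Type} (G Gstar : PDAG V) (hG : G.IsMPDAG) (hGs : Gstar.IsMPDAG)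
    (hrep : PDAG.RepresentedBy Gstar G) (A Y : Set V) (hAY : Disjoint A Y)
    (hnid : ¬ G.IdCond A Y) (p : List V) (A1 V1 : V) (t : List V)
    (hpe : p = A1 :: V1 :: t) (hshort : G.ShortestViol A Y p)
    (hu : Gstar.undir A1 V1) :
    Gstar.ViolPath A Y p ∧ ¬ Gstar.IdCond A Y := by
  obtain ⟨⟨hw1, hw2, hw3⟩, hacy, hmeek⟩ := hG
  obtain ⟨⟨hs1, hs2, hs3⟩, hsacy, hR1, hR2, hR3, hR4⟩ := hGs
  obtain ⟨hadj, huc, hdirs⟩ := hrep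
  obtain ⟨⟨⟨⟨hlen2, hnodup, hchain⟩, hpc, hprop, hend⟩, hsu⟩, hmin⟩ := hshort
  -- basic facts
  have hplen : p.length = t.length + 2 := by rw [hpe]; simp
  have h0 : (0:ℕ) < p.length := by omega
  have h1 : (1:ℕ) < p.length := by omega
  have e0 : p[0]'h0 = A1 := by simp [hpe]
  have e1 : p[1]'h1 = V1 := by simp [hpe]
  -- the first edge of p is undirected in G
  have hgu : G.undir A1 V1 := by
    obtain ⟨a, b, t', he, hu'⟩ := hsu
    rw [hpe] at he
    injection he with ha he; injection he with hb he
    subst ha; subst hb; exact hu'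
  have hA1 : A1 ∈ A ∧ ∀ x ∈ V1 :: t, x ∉ A := by
    obtain ⟨a0, t0, he0, ha0, ht0⟩ := hprop
    rw [hpe] at he0
    injection he0 with ha he0
    subst ha; subst he0; exact ⟨ha0, ht0⟩
  have adjsymm : ∀ (H : PDAG V) (a b : V), H.adj a b → H.adj b a := by
    intro H a b h
    rcases h with h | h | h
    · exact Or.inr (Or.inl h)
    · exact Or.inl h
    · exact Or.inr (Or.inr (H.undir_symm _ _ h))
  -- pairwise and chain facts as indexed statements
  have pc : ∀ (i j : ℕ) (hi : i < p.length) (hj : j < p.length), i < j →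
      ¬ G.dir (p[j]'hj) (p[i]'hi) := by
    intro i j hi hj hij
    exact List.pairwise_iff_get.1 hpc ⟨i, hi⟩ ⟨j, hj⟩ hij
  have hch : ∀ (i : ℕ) (h : i + 1 < p.length),
      G.adj (p[i]'(by omega)) (p[i+1]'h) := by
    intro i h
    have := List.isChain_iff_getElem.1 hchain i (by omega)
    simpa using this
  -- shortcut lemma from shortestness
  have shortcut : ∀ (i j : ℕ) (hi : i < p.length) (hj : j < p.length),
      i + 1 < j → G.adj (p[i]'hi) (p[j]'hj) →
      (1 ≤ i ∨ G.undir (p[i]'hi) (p[j]'hj)) → False := by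
    intro i j hi hj hij hadjij hstart
    set q := p.take (i+1) ++ p.drop j with hq
    have hsub : q.Sublist p := by
      have h1' : p.take (i+1) = (p.take j).take (i+1) := by
        rw [List.take_take]; congr 1; omega
      have h2' : (p.take (i+1)).Sublist (p.take j) := by
        rw [h1']; exact List.take_sublist _ _
      have h3' := List.Sublist.append h2' (List.Sublist.refl (p.drop j))
      rwa [List.take_append_drop] at h3'
    have hqlen : q.length = (i+1) + (p.length - j) := by
      simp [hq, List.length_take, List.length_drop]; omega
    have hqlt : q.length < p.length := by omega
    have hlast_take : (p.take (i+1)).getLast? = some (p[i]'hi) := by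
      rw [List.getLast?_eq_getElem?]
      have hltk : (p.take (i+1)).length = i + 1 := by
        rw [List.length_take]; omega
      rw [hltk]
      simp [List.getElem?_take, List.getElem?_eq_getElem hi]
    have hhead_drop : (p.drop j).head? = some (p[j]'hj) := by
      rw [List.head?_drop]; exact List.getElem?_eq_getElem hj
    have hqviol : G.ViolPath A Y q := by
      refine ⟨⟨⟨by omega, hsub.nodup hnodup, ?_⟩, hpc.sublist hsub, ?_, ?_⟩, ?_⟩
      · -- chain
        rw [hq, List.Chain', List.isChain_append]
        refine ⟨hchain.take _, hchain.drop _, ?_⟩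
        intro x hx y hy
        rw [hlast_take] at hx
        rw [hhead_drop] at hy
        simp only [Option.mem_def, Option.some.injEq] at hx hy
        subst hx; subst hy
        exact hadjij
      · -- proper
        have hq' : q = A1 :: ((V1 :: t).take i ++ p.drop j) := by
          rw [hq, hpe, List.take_succ_cons]; rfl
        refine ⟨A1, (V1 :: t).take i ++ p.drop j, hq', hA1.1, ?_⟩
        intro x hx
        rcases List.mem_append.1 hx with hx | hx
        · exact hA1.2 x (List.take_subset _ _ hx)
        · obtain ⟨j', rfl⟩ : ∃ j', j = j' + 1 := ⟨j - 1, by omega⟩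
          have : x ∈ V1 :: t := by
            have : p.drop (j' + 1) = (V1 :: t).drop j' := by
              rw [hpe]; rfl
            rw [this] at hx
            exact List.drop_subset _ _ hx
          exact hA1.2 x this
      · -- ends in Y
        obtain ⟨y, hy1, hy2⟩ := hend
        refine ⟨y, ?_, hy2⟩
        rw [List.getLast?_eq_getElem?] at hy1 ⊢
        have hle : (p.take (i+1)).length ≤ q.length - 1 := by
          rw [List.length_take]; omega
        rw [hq, List.getElem?_append_right (by simpa [hq] using hle),
          List.getElem?_drop]
        have hidx : j + ((p.take (i+1) ++ p.drop j).length - 1 -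
            (p.take (i+1)).length) = p.length - 1 := by
          simp only [List.length_append, List.length_take, List.length_drop]
          omega
        rw [hidx]
        exact hy1
      · -- starts undirected
        rcases Nat.eq_zero_or_pos i with rfl | hipos
        · rcases hstart with h | h
          · omega
          · refine ⟨A1, p[j]'hj, p.drop (j+1), ?_, ?_⟩
            · have htk : p.take (0+1) = [A1] := by rw [hpe]; rfl
              rw [hq, List.drop_eq_getElem_cons hj, htk]; rfl
            · rw [← e0]; exact h
        · obtain ⟨i', rfl⟩ : ∃ i', i = i' + 1 := ⟨i - 1, by omega⟩
          refine ⟨A1, V1, (t.take i' ++ p.drop j), ?_, hgu⟩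
          rw [hq, hpe]; rfl
    have := hmin q hqviol
    omega
  -- downward induction: a consecutive G-undirected edge cannot be backward in Gstar
  have step : ∀ (i : ℕ) (h : i + 1 < p.length),
      G.undir (p[i]'(by omega)) (p[i+1]'h) →
      Gstar.dir (p[i+1]'h) (p[i]'(by omega)) → False := by
    intro i
    induction i with
    | zero =>
      intro h hu0 hd0
      rw [e0, e1] at hd0
      exact hs2 V1 A1 ⟨hd0, Gstar.undir_symm _ _ hu⟩
    | succ i ih =>
      intro h hbc hscb
      have hi : i < p.length := by omega
      have hi1 : i + 1 < p.length := by omega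
      have hnGcb : ¬ G.dir (p[i+2]'h) (p[i+1]'hi1) := fun hd =>
        hw2 _ _ ⟨hd, G.undir_symm _ _ hbc⟩
      have hadjab : G.adj (p[i]'hi) (p[i+1]'hi1) := hch i hi1
      have hnca : ¬ G.dir (p[i+2]'h) (p[i]'hi) := pc i (i+2) hi h (by omega)
      have hnac : ¬ G.adj (p[i]'hi) (p[i+2]'h) := by
        intro hac
        rcases hac with h1 | h1 | h1
        · rcases Nat.eq_zero_or_pos i with rfl | hipos
          · have hd1 : Gstar.dir A1 (p[2]'h) := by
              rw [← e0]; exact hdirs _ _ h1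
            have hd2 : Gstar.dir (p[2]'h) V1 := by
              rw [← e1]; exact hscb
            exact hs2 A1 V1 ⟨hR2 A1 V1 (p[2]'h) hd1 hd2 hu, hu⟩
          · exact shortcut i (i+2) hi h (by omega) (Or.inl h1) (Or.inl hipos)
        · exact hnca h1
        · exact shortcut i (i+2) hi h (by omega) (Or.inr (Or.inr h1)) (Or.inr h1)
      have hnacS : ¬ Gstar.adj (p[i]'hi) (p[i+2]'h) := fun hh =>
        hnac ((hadj _ _).1 hh)
      have hncaS : ¬ Gstar.adj (p[i+2]'h) (p[i]'hi) := fun hh =>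
        hnacS (adjsymm _ _ _ hh)
      have collider : Gstar.dir (p[i]'hi) (p[i+1]'hi1) → False := by
        intro hdab
        have := (huc (p[i]'hi) (p[i+1]'hi1) (p[i+2]'h)).1 ⟨hdab, hscb, hnacS⟩
        exact hnGcb this.2.1
      rcases hadjab with h1 | h1 | h1
      · exact collider (hdirs _ _ h1)
      · exact pc i (i+1) hi hi1 (by omega) h1
      · have hadjabS : Gstar.adj (p[i]'hi) (p[i+1]'hi1) :=
          (hadj _ _).2 (Or.inr (Or.inr h1))
        rcases hadjabS with h2 | h2 | h2
        · exact collider h2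
        · exact ih hi1 h1 h2
        · have hd' : Gstar.dir (p[i+1]'hi1) (p[i]'hi) :=
            hR1 (p[i+2]'h) (p[i+1]'hi1) (p[i]'hi) hscb
              (Gstar.undir_symm _ _ h2) hncaS
          exact hs2 _ _ ⟨hd', Gstar.undir_symm _ _ h2⟩
  -- no backward Gstar edges anywhere along p
  have key : ∀ (i j : ℕ) (hi : i < p.length) (hj : j < p.length), i < j →
      ¬ Gstar.dir (p[j]'hj) (p[i]'hi) := by
    intro i j hi hj hij hd
    have hadjG : G.adj (p[i]'hi) (p[j]'hj) :=
      (hadj _ _).1 (Or.inr (Or.inl hd))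
    rcases hadjG with h1 | h1 | h1
    · exact hs1 _ _ ⟨hdirs _ _ h1, hd⟩
    · exact pc i j hi hj hij h1
    · rcases Nat.lt_or_ge (i+1) j with hlt | hge
      · exact shortcut i j hi hj hlt (Or.inr (Or.inr h1)) (Or.inr h1)
      · have hji : j = i + 1 := by omega
        subst hji
        exact step i hj h1 hd
  have hPCs : Gstar.PossiblyCausal p := by
    rw [PDAG.PossiblyCausal, List.pairwise_iff_get]
    intro i j hij
    exact key i j i.isLt j.isLt hij
  have hviols : Gstar.ViolPath A Y p := by
    refine ⟨⟨⟨hlen2, hnodup, hchain.imp fun a b hab => (hadj a b).2 hab⟩,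
      hPCs, hprop, hend⟩, A1, V1, t, hpe, hu⟩
  refine ⟨hviols, fun hid => ?_⟩
  obtain ⟨a, b, t', he, hd⟩ := hid p hviols.1
  rw [hpe] at he
  injection he with ha he; injection he with hb he
  subst ha; subst hb
  exact hs2 A1 V1 ⟨hd, hu⟩
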